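/- Let ε > 0 and let N be a positive integer. Let q₀, …, q_{N−1} and q′₀, …, q′_{N−1} be nonnegative reals satisfying q′₀ = q₀, q′_i ≤ q_i for all 0 ≤ i ≤ N−1, and q′_{i−1} ≥ q_i for all 1 ≤ i ≤ N−1. Define A = q₀ + ∑_{i=1}^{N−1} ε·(1+ε)^{i−1}·q_i and A′ = q′₀ + ∑_{i=1}^{N−1} ε·(1+ε)^{i−1}·q′_i. Then A/(1+ε) ≤ A′ ≤ A. -/

import Mathlib

open Finset

/-- Comparison of the geometric-bucket sums built from the tail probabilities `q i` of the
original randomly weighted graph and the tail probabilities `q' i` of the shrunk graphs: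
if `q'₀ = q₀`, `q' i ≤ q i` for all `0 ≤ i ≤ N-1` and `q' (i-1) ≥ q i` for all
`1 ≤ i ≤ N-1`, then `A / (1+ε) ≤ A' ≤ A`. -/
theorem bucket_sum_comparison (ε : ℝ) (hε : 0 < ε) (N : ℕ) (hN : 0 < N)
    (q q' : ℕ → ℝ)
    (hq : ∀ i ≤ N - 1, 0 ≤ q i) (hq' : ∀ i ≤ N - 1, 0 ≤ q' i)
    (h0 : q' 0 = q 0)
    (hle : ∀ i ≤ N - 1, q' i ≤ q i)
    (hge : ∀ i, 1 ≤ i → i ≤ N - 1 → q i ≤ q' (i - 1)) :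
    (q 0 + ∑ i ∈ Icc 1 (N - 1), ε * (1 + ε) ^ (i - 1) * q i) / (1 + ε)
      ≤ q' 0 + ∑ i ∈ Icc 1 (N - 1), ε * (1 + ε) ^ (i - 1) * q' i ∧
    q' 0 + ∑ i ∈ Icc 1 (N - 1), ε * (1 + ε) ^ (i - 1) * q' i
      ≤ q 0 + ∑ i ∈ Icc 1 (N - 1), ε * (1 + ε) ^ (i - 1) * q i := by
  have h1ε : (0:ℝ) < 1 + ε := by linarith
  set M := N - 1 with hM
  have hIcc : ∀ f : ℕ → ℝ, ∑ i ∈ Icc 1 M, f i = ∑ j ∈ range M, f (j + 1) := by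
    intro f
    rw [show Icc 1 M = Ico 1 (M + 1) from rfl, Finset.sum_Ico_eq_sum_range]
    refine Finset.sum_congr rfl ?_
    intro j _
    rw [Nat.add_comm]
  rw [hIcc, hIcc]
  simp only [Nat.add_sub_cancel]
  have hq'0 : 0 ≤ q' 0 := hq' 0 (by omega)
  constructor
  · rw [div_le_iff₀ h1ε]
    calc q 0 + ∑ j ∈ range M, ε * (1 + ε) ^ j * q (j + 1)
        ≤ q' 0 + ∑ j ∈ range M, ε * (1 + ε) ^ j * q' j := by
          rw [h0]
          refine add_le_add_right (Finset.sum_le_sum ?_) _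
          intro j hj
          have hjM : j + 1 ≤ M := by
            have := Finset.mem_range.mp hj; omega
          have := hge (j + 1) (by omega) hjM
          simp only [Nat.add_sub_cancel] at this
          have hpos : 0 ≤ ε * (1 + ε) ^ j := by positivity
          exact mul_le_mul_of_nonneg_left this hpos
      _ ≤ (q' 0 + ∑ j ∈ range M, ε * (1 + ε) ^ j * q' (j + 1)) * (1 + ε) := by
          rcases M with _ | M'
          · simp; nlinarith
          · rw [Finset.sum_range_succ' (fun j => ε * (1 + ε) ^ j * q' j),
              add_mul, Finset.sum_mul, Finset.sum_range_succ]
            have hsum : ∑ j ∈ range M', ε * (1 + ε) ^ (j + 1) * q' (j + 1)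
                = ∑ j ∈ range M', ε * (1 + ε) ^ j * q' (j + 1) * (1 + ε) := by
              refine Finset.sum_congr rfl ?_
              intro j _
              ring
            rw [hsum]
            have hlast : 0 ≤ ε * (1 + ε) ^ M' * q' (M' + 1) * (1 + ε) := by
              have := hq' (M' + 1) (by omega)
              positivity
            simp only [pow_zero]
            linarith
  · rw [h0]
    refine add_le_add_right (Finset.sum_le_sum ?_) _
    intro j hj
    have hjM : j + 1 ≤ M := by
      have := Finset.mem_range.mp hj; omega
    have hpos : 0 ≤ ε * (1 + ε) ^ j := by positivity
    exact mul_le_mul_of_nonneg_left (hle (j + 1) hjM) hpos
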